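/- Let p be a prime and let G be a finite group having a normal subgroup N such that N is a p-group and G/N is an abelian p'-group. Then every irreducible character of G is a {p}-lift. -/

import Mathlib

open scoped Classical

noncomputable section

/-- `χ` is a (complex) character of `G`: the character of some finite-dimensional
complex representation of `G`. -/
def IsChar {G : Type} [Group G] (χ : G → ℂ) : Prop :=
  ∃ V : FDRep ℂ G, V.character = χ

/-- The induced class function `θ^G` of a function `θ` on a subgroup `H ≤ G`,
given by the usual induction formula (extend `θ` by zero outside `H` and average
over conjugates). -/
def Ind {G : Type} [Group G] [Fintype G] (H : Subgroup G) (θ : ↥H → ℂ) : G → ℂ :=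
  fun g => (Nat.card ↥H : ℂ)⁻¹ *
    ∑ x : G, if h : x⁻¹ * g * x ∈ H then θ ⟨x⁻¹ * g * x, h⟩ else 0

/-- `χ` is an irreducible character: a nonzero character that is not the sum of
two nonzero characters. -/
def IsIrredChar {G : Type} [Group G] (χ : G → ℂ) : Prop :=
  IsChar χ ∧ χ ≠ 0 ∧
    ∀ α β : G → ℂ, IsChar α → IsChar β → α ≠ 0 → β ≠ 0 → χ ≠ α + β

/-- `χ` is monomial: induced from a linear character of some subgroup. -/
def IsMonomialChar {G : Type} [Group G] [Fintype G] (χ : G → ℂ) : Prop :=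
  ∃ (H : Subgroup G) (lam : ↥H → ℂ), IsChar lam ∧ lam 1 = 1 ∧ Ind H lam = χ

/-- `χ` is primitive: irreducible and not induced from any character of a proper
subgroup. -/
def IsPrimitiveChar {G : Type} [Group G] [Fintype G] (χ : G → ℂ) : Prop :=
  IsIrredChar χ ∧ ∀ H : Subgroup G, H ≠ ⊤ → ∀ θ : ↥H → ℂ, IsChar θ → Ind H θ ≠ χ

/-- `χ` is super-monomial: irreducible, and every primitive character of a subgroup
of `G` that induces `χ` is linear. -/
def IsSuperMonomialChar {G : Type} [Group G] [Fintype G] (χ : G → ℂ) : Prop :=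
  IsIrredChar χ ∧
    ∀ (H : Subgroup G) (θ : ↥H → ℂ), IsPrimitiveChar θ → Ind H θ = χ → θ 1 = 1

/-- `G` is an `M`-group: every irreducible character is monomial. -/
def IsMGroup (G : Type) [Group G] [Fintype G] : Prop :=
  ∀ χ : G → ℂ, IsIrredChar χ → IsMonomialChar χ

/-- `G` is a super `M`-group: every irreducible character is super-monomial. -/
def IsSuperMGroup (G : Type) [Group G] [Fintype G] : Prop :=
  ∀ χ : G → ℂ, IsIrredChar χ → IsSuperMonomialChar χ

/-- `n` is a `π`-number: all of its prime divisors lie in `π`. -/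
def IsPiNumber (π : Set ℕ) (n : ℕ) : Prop :=
  ∀ q : ℕ, q.Prime → q ∣ n → q ∈ π

/-- `g` is a `π`-element: its order is a `π`-number. -/
def IsPiElement (π : Set ℕ) {G : Type} [Group G] (g : G) : Prop :=
  IsPiNumber π (orderOf g)

/-- The `π`-partial character `χ^π`: the restriction of `χ` to the set `G^π` of
`π`-elements of `G`, encoded as the function that agrees with `χ` on `π`-elements
and is `0` elsewhere. -/
def restPi (π : Set ℕ) {G : Type} [Group G] (χ : G → ℂ) : G → ℂ :=
  fun g => if IsPiElement π g then χ g else 0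

/-- `φ` is a `π`-partial character of `G`: the restriction to `G^π` of some
character of `G`. -/
def IsPartialChar (π : Set ℕ) {G : Type} [Group G] (φ : G → ℂ) : Prop :=
  ∃ χ : G → ℂ, IsChar χ ∧ φ = restPi π χ

/-- `φ` is an irreducible `π`-partial character (i.e. `φ ∈ I_π(G)`): a nonzero
`π`-partial character that is not the sum of two nonzero `π`-partial characters. -/
def IsIrredPartialChar (π : Set ℕ) {G : Type} [Group G] (φ : G → ℂ) : Prop :=
  IsPartialChar π φ ∧ φ ≠ 0 ∧
    ∀ α β : G → ℂ, IsPartialChar π α → IsPartialChar π β → α ≠ 0 → β ≠ 0 → φ ≠ α + β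

/-- A `π`-partial character is monomial if it is induced from a linear `π`-partial
character of some subgroup. -/
def IsMonomialPartialChar (π : Set ℕ) {G : Type} [Group G] [Fintype G] (φ : G → ℂ) : Prop :=
  ∃ (H : Subgroup G) (lam : ↥H → ℂ), IsPartialChar π lam ∧ lam 1 = 1 ∧ Ind H lam = φ

/-- A `π`-partial character is primitive if it is irreducible and not induced from a
`π`-partial character of any proper subgroup. -/
def IsPrimitivePartialChar (π : Set ℕ) {G : Type} [Group G] [Fintype G] (φ : G → ℂ) : Prop :=
  IsIrredPartialChar π φ ∧
    ∀ H : Subgroup G, H ≠ ⊤ → ∀ θ : ↥H → ℂ, IsPartialChar π θ → Ind H θ ≠ φ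

/-- A `π`-partial character is super-monomial if every primitive irreducible
`π`-partial character of a subgroup of `G` inducing it is linear. -/
def IsSuperMonomialPartialChar (π : Set ℕ) {G : Type} [Group G] [Fintype G] (φ : G → ℂ) : Prop :=
  ∀ (H : Subgroup G) (θ : ↥H → ℂ), IsPrimitivePartialChar π θ → Ind H θ = φ → θ 1 = 1

/-- `G` is `π`-separable: every composition factor of `G` (the simple factor of any
composition series of `G`) is a `π`-group or a `π'`-group. -/
def IsPiSeparable (π : Set ℕ) (G : Type) [Group G] : Prop :=
  ∀ (n : ℕ) (f : Fin (n + 1) → Subgroup G), f 0 = ⊥ → f (Fin.last n) = ⊤ →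
    (∀ i : Fin n,
      f i.castSucc < f i.succ ∧ ((f i.castSucc).subgroupOf (f i.succ)).Normal ∧
      -- the factor `f i.succ / f i.castSucc` is simple
      (∀ L : Subgroup ↥(f i.succ), L.Normal → (f i.castSucc).subgroupOf (f i.succ) < L →
        L = ⊤)) →
    ∀ i : Fin n,
      IsPiNumber π (Nat.card (↥(f i.succ) ⧸ (f i.castSucc).subgroupOf (f i.succ))) ∨
      IsPiNumber πᶜ (Nat.card (↥(f i.succ) ⧸ (f i.castSucc).subgroupOf (f i.succ)))

/-- `S` is a subnormal subgroup of `G`. -/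
def IsSubnormal {G : Type} [Group G] (S : Subgroup G) : Prop :=
  ∃ (n : ℕ) (f : Fin (n + 1) → Subgroup G), f 0 = S ∧ f (Fin.last n) = ⊤ ∧
    ∀ i : Fin n, f i.castSucc ≤ f i.succ ∧ ((f i.castSucc).subgroupOf (f i.succ)).Normal

/-- The determinant character of a representation `V`: `g ↦ det (ρ_V g)`. -/
def detHom {G : Type} [Group G] (V : FDRep ℂ G) : G →* ℂ :=
  LinearMap.det.comp V.ρ

/-- `χ` is a `π`-special character of `H`: `χ` is irreducible, `χ(1)` is a
`π`-number, and for every subnormal subgroup `S` of `H` and every irreducible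
constituent `θ` of the restriction of `χ` to `S`, the order of the determinant
character of `θ` is a `π`-number. -/
def IsPiSpecial (π : Set ℕ) {H : Type} [Group H] (χ : H → ℂ) : Prop :=
  IsIrredChar χ ∧ (∃ d : ℕ, χ 1 = (d : ℂ) ∧ IsPiNumber π d) ∧
    ∀ S : Subgroup H, IsSubnormal S →
      ∀ θ : ↥S → ℂ, IsIrredChar θ →
        (∃ ψ : ↥S → ℂ, IsChar ψ ∧ (fun s : ↥S => χ ↑s) = θ + ψ) →
          ∀ V : FDRep ℂ ↥S, V.character = θ → IsPiNumber π (orderOf (detHom V))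

/-- `M` is a Frobenius group with Frobenius kernel `N`: `N` is a nontrivial proper
normal subgroup of `M` such that the centralizer of every nonidentity element of
`N` is contained in `N`. -/
def IsFrobeniusKernel {M : Type} [Group M] (N : Subgroup M) : Prop :=
  N ≠ ⊥ ∧ N ≠ ⊤ ∧ N.Normal ∧
    ∀ x ∈ N, x ≠ 1 → ∀ y : M, y * x = x * y → y ∈ N

open CategoryTheory LinearMap Representation Module FDRep

variable {G : Type} [Group G] [Fintype G]

instance : Invertible ((Fintype.card G : ℂ)) :=
  invertibleOfNonzero (Nat.cast_ne_zero.mpr Fintype.card_ne_zero)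

/-- hom dimension formula -/
lemma homdim (X Y : FDRep ℂ G) :
    (Fintype.card G : ℂ)⁻¹ * ∑ g : G, X.character g⁻¹ * Y.character g
      = (finrank ℂ (X ⟶ Y) : ℂ) := by
  have h1 : ∀ g : G, X.character g⁻¹ * Y.character g
      = (FDRep.of (linHom X.ρ Y.ρ)).character g := fun g => (char_linHom X Y g).symm
  simp_rw [h1]
  rw [show (Fintype.card G : ℂ)⁻¹ * ∑ g : G, (FDRep.of (linHom X.ρ Y.ρ)).character g
      = ⅟(Fintype.card G : ℂ) • ∑ g : G, (FDRep.of (linHom X.ρ Y.ρ)).character g by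
    rw [invOf_eq_inv (Fintype.card G : ℂ), smul_eq_mul]]
  rw [invOf_eq_inv, smul_eq_mul, ← Nat.card_eq_fintype_card, average_char_eq_finrank_invariants]
  rw [show (FDRep.of (linHom X.ρ Y.ρ)).ρ = linHom X.ρ Y.ρ from rfl]
  norm_cast
  exact (linHom.invariantsEquivFDRepHom (G := G) X Y).finrank_eq

def twist (V : FDRep ℂ G) (μ : G →* ℂˣ) : FDRep ℂ G :=
  FDRep.of (V := V)
    { toFun := fun g => (μ g : ℂ) • (V.ρ g)
      map_one' := by simp
      map_mul' := by
        intro g h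
        simp only [map_mul, Units.val_mul]
        rw [smul_mul_smul_comm] }

@[simp] lemma twist_char (V : FDRep ℂ G) (μ : G →* ℂˣ) (g : G) :
    (twist V μ).character g = (μ g : ℂ) * V.character g := by
  show (LinearMap.trace ℂ _) ((μ g : ℂ) • (V.ρ g)) = _
  rw [map_smul, smul_eq_mul]
  rfl

omit [Fintype G] in
lemma char_eq_zero_of_finrank_eq_zero {V : FDRep ℂ G} (h : finrank ℂ V = 0) :
    V.character = 0 := by
  have : Subsingleton V := by
    rw [finrank_zero_iff] at h; exact h
  funext g
  show (LinearMap.trace ℂ _) (V.ρ g) = 0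
  rw [Subsingleton.elim (V.ρ g) 0, map_zero]

omit [Fintype G] in
lemma finrank_pos_of_char_ne_zero {V : FDRep ℂ G} (h : V.character ≠ 0) :
    0 < finrank ℂ V := by
  rcases Nat.eq_zero_or_pos (finrank ℂ V) with h0 | h1
  · exact absurd (char_eq_zero_of_finrank_eq_zero h0) h
  · exact h1

/-- subrepresentation on an invariant submodule -/
def subRep {X : Type} [AddCommGroup X] [Module ℂ X] (ρ : Representation ℂ G X)
    (U : Submodule ℂ X) (hU : ∀ g : G, ∀ x ∈ U, ρ g x ∈ U) : Representation ℂ G U where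
  toFun g := (ρ g).restrict (fun x hx => hU g x hx)
  map_one' := by ext x; simp [LinearMap.restrict_apply]
  map_mul' g h := by ext x; simp [LinearMap.restrict_apply]

lemma subRep_apply {X : Type} [AddCommGroup X] [Module ℂ X] (ρ : Representation ℂ G X)
    (U : Submodule ℂ X) (hU) (g : G) (x : U) :
    ((subRep ρ U hU g x : U) : X) = ρ g (x : X) := rfl

omit [Fintype G] in
lemma char_add_of_isCompl (V : FDRep ℂ G) (U C : Submodule ℂ V)
    (hU : ∀ g : G, ∀ x ∈ U, V.ρ g x ∈ U) (hC : ∀ g : G, ∀ x ∈ C, V.ρ g x ∈ C)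
    (h : IsCompl U C) (g : G) :
    V.character g = (FDRep.of (subRep V.ρ U hU)).character g
      + (FDRep.of (subRep V.ρ C hC)).character g := by
  classical
  set Nn : Bool → Submodule ℂ V := fun b => if b then U else C with hN
  have hint : DirectSum.IsInternal Nn := by
    rw [DirectSum.isInternal_submodule_iff_isCompl Nn (i := true) (j := false) (by simp)]
    · simpa [hN] using h
    · ext b; cases b <;> simp
  have hmt : ∀ b : Bool, Set.MapsTo (V.ρ g) (Nn b) (Nn b) := by
    intro b; cases b
    · intro x hx; exact hC g x hx
    · intro x hx; exact hU g x hx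
  have := LinearMap.trace_eq_sum_trace_restrict hint hmt (f := V.ρ g)
  show (LinearMap.trace ℂ _) (V.ρ g) = _
  rw [this]
  show _ = (LinearMap.trace ℂ _) ((subRep V.ρ U hU) g) + (LinearMap.trace ℂ _) ((subRep V.ρ C hC) g)
  rw [Fintype.sum_bool]
  rfl

/-- Maschke: an invariant submodule of a f.d. complex rep has an invariant complement. -/
lemma exists_invariant_compl (V : FDRep ℂ G) (U : Submodule ℂ V)
    (hU : ∀ g : G, ∀ x ∈ U, V.ρ g x ∈ U) :
    ∃ C : Submodule ℂ V, (∀ g : G, ∀ x ∈ C, V.ρ g x ∈ C) ∧ IsCompl U C := by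
  classical
  -- choose any linear projection onto U
  obtain ⟨C₀, hC₀⟩ := Submodule.exists_isCompl U
  set π₀ : V →ₗ[ℂ] V := U.subtype ∘ₗ (U.projectionOnto C₀ hC₀) with hπ₀
  have hπ₀mem : ∀ x : V, π₀ x ∈ U := fun x => (U.projectionOnto C₀ hC₀ x).2
  have hπ₀id : ∀ x ∈ U, π₀ x = x := by
    intro x hx
    simp [hπ₀, Submodule.projectionOnto_apply_left hC₀ ⟨x, hx⟩]
  -- average
  set P : V →ₗ[ℂ] V :=
    (Fintype.card G : ℂ)⁻¹ • ∑ g : G, (V.ρ g⁻¹) ∘ₗ π₀ ∘ₗ (V.ρ g) with hP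
  have hPmem : ∀ x : V, P x ∈ U := by
    intro x
    rw [hP]
    simp only [LinearMap.smul_apply, LinearMap.sum_apply, LinearMap.comp_apply]
    exact Submodule.smul_mem _ _ (Submodule.sum_mem _ fun g _ =>
      hU g⁻¹ _ (hπ₀mem _))
  have hPid : ∀ x ∈ U, P x = x := by
    intro x hx
    rw [hP]
    simp only [LinearMap.smul_apply, LinearMap.sum_apply, LinearMap.comp_apply]
    have : ∀ g : G, V.ρ g⁻¹ (π₀ (V.ρ g x)) = x := by
      intro g
      rw [hπ₀id _ (hU g x hx)]
      show (V.ρ g⁻¹ * V.ρ g) x = x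
      rw [← map_mul, inv_mul_cancel, map_one]
      rfl
    simp only [this, Finset.sum_const, Finset.card_univ, ← Nat.cast_smul_eq_nsmul ℂ, smul_smul]
    rw [inv_mul_cancel₀ (Nat.cast_ne_zero.mpr Fintype.card_ne_zero), one_smul]
  have hPcomm : ∀ h : G, P ∘ₗ (V.ρ h) = (V.ρ h) ∘ₗ P := by
    intro h
    rw [hP]
    ext x
    simp only [LinearMap.smul_apply, LinearMap.sum_apply, LinearMap.comp_apply,
      LinearMap.map_smul, map_sum]
    congr 1
    refine Fintype.sum_bijective (· * h) (Group.mulRight_bijective h) _ _ ?_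
    intro g
    have h1 : (V.ρ g) ((V.ρ h) x) = (V.ρ (g * h)) x := by rw [map_mul]; rfl
    have h2 : g⁻¹ = h * (g * h)⁻¹ := by group
    calc (V.ρ g⁻¹) (π₀ ((V.ρ g) ((V.ρ h) x)))
        = (V.ρ (h * (g * h)⁻¹)) (π₀ ((V.ρ (g * h)) x)) := by rw [h1, ← h2]
      _ = (V.ρ h) ((V.ρ (g * h)⁻¹) (π₀ ((V.ρ (g * h)) x))) := by rw [map_mul]; rfl
  refine ⟨LinearMap.ker P, ?_, ?_⟩
  · intro g x hx
    have : P (V.ρ g x) = V.ρ g (P x) := by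
      have := congrArg (fun f => f x) (hPcomm g); simpa using this
    simp only [LinearMap.mem_ker] at hx ⊢
    rw [this, hx, map_zero]
  · have := LinearMap.isCompl_of_proj (f := P.codRestrict U hPmem)
      (fun x => Subtype.ext (by simpa using hPid (x : V) x.2))
    rwa [LinearMap.ker_codRestrict] at this

omit [Fintype G] in
lemma char_eq_of_equivariant_equiv {X : Type} [AddCommGroup X] [Module ℂ X]
    [FiniteDimensional ℂ X] (ρX : Representation ℂ G X) (Y : FDRep ℂ G)
    (e : X ≃ₗ[ℂ] Y) (he : ∀ (g : G) (x : X), e (ρX g x) = Y.ρ g (e x)) (g : G) :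
    (FDRep.of ρX).character g = Y.character g := by
  show LinearMap.trace ℂ _ (ρX g) = LinearMap.trace ℂ _ (Y.ρ g)
  rw [← LinearMap.trace_conj' (ρX g) e]
  congr 1
  ext y
  simp [LinearEquiv.conj_apply, he]

omit [Fintype G] in
lemma hom_comm {A Y : FDRep ℂ G} (f : A ⟶ Y) (g : G) (x : A) :
    f.hom (A.ρ g x) = Y.ρ g (f.hom x) := by
  have := f.comm g
  exact congrArg (fun h => h x) (congrArg (fun (m) => m) this) |>.symm ▸ rfl

omit [Fintype G] in
lemma hom_ne_zero {A Y : FDRep ℂ G} {f : A ⟶ Y} (hf : f ≠ 0) :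
    ∃ x : A, f.hom x ≠ 0 := by
  by_contra h
  push_neg at h
  apply hf
  ext x
  exact h x

lemma peel (N : Subgroup G) (V : FDRep ℂ G)
    (hirr : ∀ α β : G → ℂ, IsChar α → IsChar β → α ≠ 0 → β ≠ 0 →
      V.character ≠ α + β)
    (μ : G →* ℂˣ) (hμ : ∀ n ∈ N, μ n = 1)
    (A B : FDRep ℂ G) (hAB : ∀ n ∈ N, V.character n = A.character n + B.character n)
    (hB : 0 < finrank ℂ B)
    (f : A ⟶ twist V μ) (hf : f ≠ 0) : False := by
  classical
  obtain ⟨x₀, hx₀⟩ := hom_ne_zero hf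
  have hYchar : ∀ g : G, (twist V μ).character g = (μ g : ℂ) * V.character g :=
    fun g => twist_char V μ g
  set U : Submodule ℂ (twist V μ) := LinearMap.range (f.hom.hom.hom : A →ₗ[ℂ] (twist V μ)) with hUdef
  have hUinv : ∀ g : G, ∀ y ∈ U, (twist V μ).ρ g y ∈ U := by
    rintro g y ⟨x, rfl⟩
    exact ⟨A.ρ g x, hom_comm f g x⟩
  by_cases hU : U = ⊤
  · -- f is surjective : peel off a copy of Y from A
    set K : Submodule ℂ A := LinearMap.ker (f.hom.hom.hom : A →ₗ[ℂ] (twist V μ)) with hKdef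
    have hKinv : ∀ g : G, ∀ x ∈ K, A.ρ g x ∈ K := by
      intro g x hx
      have hx' : f.hom x = 0 := hx
      have hcg : f.hom (A.ρ g x) = (twist V μ).ρ g (f.hom x) := hom_comm f g x
      show f.hom (A.ρ g x) = 0
      rw [hcg, hx', map_zero]
    obtain ⟨K', hK'inv, hcompl⟩ := exists_invariant_compl A K hKinv
    have hcharA : ∀ g : G, A.character g
        = (FDRep.of (subRep A.ρ K hKinv)).character g
          + (FDRep.of (subRep A.ρ K' hK'inv)).character g :=
      char_add_of_isCompl A K K' hKinv hK'inv hcompl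
    -- the equivariant isomorphism K' ≃ Y
    have hbij : Function.Bijective ((f.hom.hom.hom : A →ₗ[ℂ] (twist V μ)).comp K'.subtype) := by
      constructor
      · intro x y hxy
        have : ((x : A) - y) ∈ K := by
          simp only [hKdef, LinearMap.mem_ker, map_sub]
          simpa [sub_eq_zero] using hxy
        have h2 : ((x : A) - y) ∈ K' := sub_mem x.2 y.2
        have := hcompl.disjoint
        rw [Submodule.disjoint_def] at this
        have h0 := this _ ‹((x : A) - y) ∈ K› h2
        exact Subtype.ext (by rwa [sub_eq_zero] at h0)
      · intro y
        have hy : y ∈ U := by rw [hU]; trivial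
        obtain ⟨x, hx⟩ := hy
        have hxmem : x ∈ K ⊔ K' := by rw [hcompl.sup_eq_top]; trivial
        obtain ⟨k, hk, k', hk', rfl⟩ := Submodule.mem_sup.mp hxmem
        refine ⟨⟨k', hk'⟩, ?_⟩
        show f.hom k' = y
        have hk0 : f.hom k = 0 := hk
        have hadd : f.hom (k + k') = f.hom k + f.hom k' :=
          (f.hom.hom.hom : A →ₗ[ℂ] (twist V μ)).map_add k k'
        rw [hk0, zero_add] at hadd
        exact hadd.symm.trans hx
    set e : K' ≃ₗ[ℂ] (twist V μ) := LinearEquiv.ofBijective _ hbij with he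
    have hequiv : ∀ (g : G) (x : K'), e ((subRep A.ρ K' hK'inv) g x) = (twist V μ).ρ g (e x) := by
      intro g x
      show f.hom ((subRep A.ρ K' hK'inv g x : K') : A) = (twist V μ).ρ g (f.hom (x : A))
      rw [subRep_apply]
      exact hom_comm f g (x : A)
    have hcharK' : ∀ g : G, (FDRep.of (subRep A.ρ K' hK'inv)).character g = (twist V μ).character g :=
      fun g => char_eq_of_equivariant_equiv _ (twist V μ) e hequiv g
    -- evaluate at 1
    have h1 : V.character 1 = A.character 1 + B.character 1 := hAB 1 N.one_mem
    have h2 : A.character 1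
        = (FDRep.of (subRep A.ρ K hKinv)).character 1 + V.character 1 := by
      rw [hcharA 1, hcharK' 1, hYchar 1]
      simp
    rw [h2] at h1
    have h3 : (FDRep.of (subRep A.ρ K hKinv)).character 1 + B.character 1 = 0 := by
      linear_combination (-1 : ℂ) * h1
    rw [FDRep.char_one, FDRep.char_one] at h3
    have hnat : finrank ℂ (FDRep.of (subRep A.ρ K hKinv)) + finrank ℂ B = 0 := by
      exact_mod_cast h3
    omega
  · -- the range is a proper invariant subspace: contradiction with irreducibility
    have hUne : U ≠ ⊥ := by
      intro h0
      apply hx₀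
      have : f.hom x₀ ∈ U := ⟨x₀, rfl⟩
      rw [h0] at this
      simpa using this
    obtain ⟨C, hCinv, hcompl⟩ := exists_invariant_compl (twist V μ) U hUinv
    have hCne : C ≠ ⊥ := by
      intro h0
      apply hU
      have := hcompl.sup_eq_top
      rwa [h0, sup_bot_eq] at this
    set A' := twist (FDRep.of (subRep (twist V μ).ρ U hUinv)) μ⁻¹ with hA'
    set B' := twist (FDRep.of (subRep (twist V μ).ρ C hCinv)) μ⁻¹ with hB'
    apply hirr A'.character B'.character ⟨A', rfl⟩ ⟨B', rfl⟩
    · intro h0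
      have h1 : A'.character 1 = 0 := congrFun h0 1
      rw [FDRep.char_one] at h1
      have : finrank ℂ A' = 0 := by exact_mod_cast h1
      rw [show finrank ℂ A' = finrank ℂ U from rfl] at this
      exact hUne (Submodule.finrank_eq_zero.mp this)
    · intro h0
      have h1 : B'.character 1 = 0 := congrFun h0 1
      rw [FDRep.char_one] at h1
      have : finrank ℂ B' = 0 := by exact_mod_cast h1
      rw [show finrank ℂ B' = finrank ℂ C from rfl] at this
      exact hCne (Submodule.finrank_eq_zero.mp this)
    · funext g
      have hYc : (twist V μ).character g
          = (FDRep.of (subRep (twist V μ).ρ U hUinv)).character g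
            + (FDRep.of (subRep (twist V μ).ρ C hCinv)).character g :=
        char_add_of_isCompl (twist V μ) U C hUinv hCinv hcompl g
      have hA'c : A'.character g
          = ((μ g)⁻¹ : ℂˣ) * (FDRep.of (subRep (twist V μ).ρ U hUinv)).character g := twist_char _ _ g
      have hB'c : B'.character g
          = ((μ g)⁻¹ : ℂˣ) * (FDRep.of (subRep (twist V μ).ρ C hCinv)).character g := twist_char _ _ g
      have hμg : (μ g : ℂ) ≠ 0 := Units.ne_zero _
      show V.character g = A'.character g + B'.character g
      rw [hA'c, hB'c, ← mul_add, ← hYc, hYchar g]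
      field_simp
      rw [mul_assoc, ← Units.val_mul, inv_mul_cancel, Units.val_one, mul_one]

lemma pi_elem_iff (p : ℕ) (hp : p.Prime) (N : Subgroup G) [N.Normal]
    (hNp : IsPGroup p ↥N) (hp' : ¬ p ∣ Nat.card (G ⧸ N)) (g : G) :
    IsPiElement {p} g ↔ g ∈ N := by
  constructor
  · intro h
    have h1 : orderOf ((g : G ⧸ N)) ∣ orderOf g :=
      orderOf_map_dvd (QuotientGroup.mk' N) g
    have h2 : orderOf ((g : G ⧸ N)) ∣ Nat.card (G ⧸ N) := orderOf_dvd_natCard _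
    have h3 : orderOf ((g : G ⧸ N)) = 1 := by
      by_contra hne
      obtain ⟨q, hq, hqd⟩ := Nat.exists_prime_and_dvd hne
      have : q ∈ ({p} : Set ℕ) := h q hq (hqd.trans h1)
      rw [Set.mem_singleton_iff] at this
      subst this
      exact hp' (hqd.trans h2)
    rw [orderOf_eq_one_iff] at h3
    exact (QuotientGroup.eq_one_iff g).mp h3
  · intro hg q hq hqd
    obtain ⟨k, hk⟩ := hNp ⟨g, hg⟩
    have hk2 : g ^ (p ^ k) = 1 := by
      have := congrArg (Subgroup.subtype N) hk
      simpa using this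
    have hdvd : orderOf g ∣ p ^ k := orderOf_dvd_of_pow_eq_one hk2
    replace hqd := hqd.trans hdvd
    rw [Set.mem_singleton_iff]
    exact (Nat.prime_dvd_prime_iff_eq hq hp).mp (hq.dvd_of_dvd_pow hqd)

lemma one_is_pi_elem (π : Set ℕ) : IsPiElement π (1 : G) := by
  intro q hq hqd
  rw [orderOf_one] at hqd
  exact absurd (Nat.eq_one_of_dvd_one hqd) hq.ne_one

lemma sum_hom_eq_zero {Q : Type} [CommGroup Q] [Finite Q] [Fintype (Q →* ℂˣ)]
    {x : Q} (hx : x ≠ 1) : ∑ l : Q →* ℂˣ, ((l x : ℂˣ) : ℂ) = 0 := by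
  haveI : NeZero ((Monoid.exponent Q : ℂ)) :=
    ⟨Nat.cast_ne_zero.mpr Monoid.exponent_ne_zero_of_finite⟩
  obtain ⟨φ, hφ⟩ := CommGroup.exists_apply_ne_one_of_hasEnoughRootsOfUnity Q ℂ hx
  have hre : ∑ l : Q →* ℂˣ, (((φ * l) x : ℂˣ) : ℂ) = ∑ l : Q →* ℂˣ, ((l x : ℂˣ) : ℂ) :=
    Fintype.sum_bijective (φ * ·) (Group.mulLeft_bijective φ) _ _ (fun l => rfl)
  have hre2 : ∀ l : Q →* ℂˣ, (((φ * l) x : ℂˣ) : ℂ) = (φ x : ℂ) * ((l x : ℂˣ) : ℂ) := by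
    intro l; rfl
  simp_rw [hre2, ← Finset.mul_sum] at hre
  have hφx : ((φ x : ℂˣ) : ℂ) ≠ 1 := by
    intro h
    exact hφ (Units.ext h)
  by_contra hS
  have hre' : (φ x : ℂ) * ∑ l : Q →* ℂˣ, ((l x : ℂˣ) : ℂ)
      = 1 * ∑ l : Q →* ℂˣ, ((l x : ℂˣ) : ℂ) := by rw [one_mul]; exact hre
  exact hφx (mul_right_cancel₀ hS hre')

/-- Let `p` be a prime and `G` a finite group with a normal subgroup
`N` such that `N` is a `p`-group and `G/N` is an abelian `p'`-group. Then every
irreducible character of `G` is a `{p}`-lift. -/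
theorem every_char_is_p_lift_of_pGroup_by_abelian
    (p : ℕ) (hp : p.Prime)
    (G : Type) [Group G] [Fintype G]
    (N : Subgroup G) [N.Normal] (hNp : IsPGroup p ↥N)
    (hab : ∀ x y : G ⧸ N, x * y = y * x)
    (hp' : ¬ p ∣ Nat.card (G ⧸ N)) :
    ∀ χ : G → ℂ, IsIrredChar χ → IsIrredPartialChar {p} (restPi {p} χ) := by

  intro χ hχ
  obtain ⟨⟨V, hV⟩, hχ0, hχirr⟩ := hχ
  subst hV
  have hmem : ∀ g : G, IsPiElement {p} g ↔ g ∈ N := pi_elem_iff p hp N hNp hp'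
  have hdimV : 0 < finrank ℂ V := finrank_pos_of_char_ne_zero hχ0
  refine ⟨⟨V.character, ⟨V, rfl⟩, rfl⟩, ?_, ?_⟩
  · intro h0
    have h1 : restPi {p} V.character 1 = 0 := congrFun h0 1
    rw [restPi, if_pos (one_is_pi_elem {p}), FDRep.char_one] at h1
    exact Nat.cast_ne_zero.mpr hdimV.ne' h1
  · intro α β hα hβ hα0 hβ0 heq
    obtain ⟨a, ⟨A, hA⟩, rfl⟩ := hα
    obtain ⟨b, ⟨B, hB⟩, rfl⟩ := hβ
    subst hA; subst hB
    have hAB : ∀ n ∈ N, V.character n = A.character n + B.character n := by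
      intro n hn
      have h1 := congrFun heq n
      simp only [Pi.add_apply, restPi, if_pos ((hmem n).mpr hn)] at h1
      exact h1
    have hdimA : 0 < finrank ℂ A := by
      apply finrank_pos_of_char_ne_zero
      intro h
      apply hα0
      funext g
      simp [restPi, h]
    have hdimB : 0 < finrank ℂ B := by
      apply finrank_pos_of_char_ne_zero
      intro h
      apply hβ0
      funext g
      simp [restPi, h]
    letI : CommGroup (G ⧸ N) := { (inferInstance : Group (G ⧸ N)) with mul_comm := hab }
    haveI : NeZero ((Monoid.exponent (G ⧸ N) : ℂ)) :=
      ⟨Nat.cast_ne_zero.mpr Monoid.exponent_ne_zero_of_finite⟩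
    haveI : Finite ((G ⧸ N) →* ℂˣ) := by
      obtain ⟨e⟩ := CommGroup.monoidHom_mulEquiv_of_hasEnoughRootsOfUnity (G ⧸ N) ℂ
      exact Finite.of_equiv _ e.symm.toEquiv
    letI : Fintype ((G ⧸ N) →* ℂˣ) := Fintype.ofFinite _
    set μ : ((G ⧸ N) →* ℂˣ) → (G →* ℂˣ) := fun l => l.comp (QuotientGroup.mk' N) with hμdef
    have hμN : ∀ l, ∀ n ∈ N, μ l n = 1 := by
      intro l n hn
      simp [hμdef, (QuotientGroup.eq_one_iff n).mpr hn]
    have key : ∀ X : FDRep ℂ G,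
        ∑ l : (G ⧸ N) →* ℂˣ, ((finrank ℂ (X ⟶ twist V (μ l)) : ℂ))
        = (Fintype.card G : ℂ)⁻¹ * ∑ g : G,
            (∑ l : (G ⧸ N) →* ℂˣ, ((μ l g : ℂˣ) : ℂ)) * (X.character g⁻¹ * V.character g) := by
      intro X
      have h1 : ∀ l : (G ⧸ N) →* ℂˣ, ((finrank ℂ (X ⟶ twist V (μ l)) : ℂ))
          = (Fintype.card G : ℂ)⁻¹
            * ∑ g : G, ((μ l g : ℂˣ) : ℂ) * (X.character g⁻¹ * V.character g) := by
        intro l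
        rw [← homdim]
        congr 1
        apply Finset.sum_congr rfl
        intro g _
        rw [twist_char]
        ring
      simp_rw [h1]
      rw [← Finset.mul_sum]
      congr 1
      rw [Finset.sum_comm]
      apply Finset.sum_congr rfl
      intro g _
      rw [Finset.sum_mul]
    have hsum0 : ∀ g : G, g ∉ N →
        (∑ l : (G ⧸ N) →* ℂˣ, ((μ l g : ℂˣ) : ℂ)) = 0 := by
      intro g hg
      have hx : ((g : G ⧸ N)) ≠ 1 := by
        rwa [ne_eq, QuotientGroup.eq_one_iff]
      exact sum_hom_eq_zero hx
    have main : (∑ l : (G ⧸ N) →* ℂˣ, (finrank ℂ (A ⟶ twist V (μ l)) : ℂ))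
          + (∑ l : (G ⧸ N) →* ℂˣ, (finrank ℂ (B ⟶ twist V (μ l)) : ℂ))
        = ∑ l : (G ⧸ N) →* ℂˣ, (finrank ℂ (V ⟶ twist V (μ l)) : ℂ) := by
      rw [key A, key B, key V, ← mul_add, ← Finset.sum_add_distrib]
      congr 1
      apply Finset.sum_congr rfl
      intro g _
      by_cases hg : g ∈ N
      · have h2 : V.character g⁻¹ = A.character g⁻¹ + B.character g⁻¹ :=
          hAB g⁻¹ (inv_mem hg)
        rw [h2]; ring
      · rw [hsum0 g hg]; ring
    have hid : ∃ f : V ⟶ twist V (μ 1), f ≠ 0 := by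
      refine ⟨⟨FGModuleCat.ofHom LinearMap.id, ?_⟩, ?_⟩
      · intro g
        ext x
        show V.ρ g x = ((μ (1 : (G ⧸ N) →* ℂˣ)) g : ℂ) • (V.ρ g x)
        simp [hμdef]
      · intro h
        haveI : Nontrivial V := Module.finrank_pos_iff.mp hdimV
        obtain ⟨x, hx⟩ := exists_ne (0 : V)
        apply hx
        have h2 := congrArg (fun f : (V ⟶ twist V (μ 1)) => f.hom x) h
        exact h2
    have hn1 : 0 < finrank ℂ (V ⟶ twist V (μ 1)) := by
      rw [Module.finrank_pos_iff]
      obtain ⟨f, hf⟩ := hid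
      exact ⟨f, 0, hf⟩
    have mainN : (∑ l : (G ⧸ N) →* ℂˣ, finrank ℂ (A ⟶ twist V (μ l)))
          + (∑ l : (G ⧸ N) →* ℂˣ, finrank ℂ (B ⟶ twist V (μ l)))
        = ∑ l : (G ⧸ N) →* ℂˣ, finrank ℂ (V ⟶ twist V (μ l)) := by
      exact_mod_cast main
    have hpos : 0 < (∑ l : (G ⧸ N) →* ℂˣ, finrank ℂ (A ⟶ twist V (μ l)))
          + (∑ l : (G ⧸ N) →* ℂˣ, finrank ℂ (B ⟶ twist V (μ l))) := by
      rw [mainN]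
      exact lt_of_lt_of_le hn1
        (Finset.single_le_sum
          (f := fun l : (G ⧸ N) →* ℂˣ => finrank ℂ (V ⟶ twist V (μ l)))
          (fun _ _ => Nat.zero_le _) (Finset.mem_univ 1))
    have hex : (∃ l₀, 0 < finrank ℂ (A ⟶ twist V (μ l₀)))
        ∨ (∃ l₀, 0 < finrank ℂ (B ⟶ twist V (μ l₀))) := by
      by_contra h
      push_neg at h
      obtain ⟨h1, h2⟩ := h
      have e1 : (∑ l : (G ⧸ N) →* ℂˣ, finrank ℂ (A ⟶ twist V (μ l))) = 0 :=
        Finset.sum_eq_zero (fun l _ => Nat.le_zero.mp (h1 l))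
      have e2 : (∑ l : (G ⧸ N) →* ℂˣ, finrank ℂ (B ⟶ twist V (μ l))) = 0 :=
        Finset.sum_eq_zero (fun l _ => Nat.le_zero.mp (h2 l))
      rw [e1, e2] at hpos
      exact lt_irrefl 0 hpos
    rcases hex with ⟨l₀, hl₀⟩ | ⟨l₀, hl₀⟩
    · haveI := Module.finrank_pos_iff.mp hl₀
      obtain ⟨f, hf⟩ := exists_ne (0 : A ⟶ twist V (μ l₀))
      exact peel N V hχirr (μ l₀) (hμN l₀) A B hAB hdimB f hf
    · haveI := Module.finrank_pos_iff.mp hl₀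
      obtain ⟨f, hf⟩ := exists_ne (0 : B ⟶ twist V (μ l₀))
      exact peel N V hχirr (μ l₀) (hμN l₀) B A
        (fun n hn => by rw [hAB n hn]; ring) hdimA f hf
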